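/- For v ∈ N let Desc(v) = {u ∈ N : parent^m(u) = v for some natural number m}, let Children(v) = {u ∈ N : u ≠ v and parent(u) = v}, and let opt(v) denote the minimum of Σ_{u ∈ S} c(u) over all S ⊆ Desc(v) with C ∩ A(v) ⊆ ⋃_{u ∈ S} A(u) (the minimum exists since N is finite and S = {v} is feasible). Then: if some client p ∈ C has asg(p) = v, then opt(v) = c(v); otherwise, opt(v) = min( c(v), Σ_{u ∈ Children(v)} opt(u) ). -/

import Mathlib

private lemma level_mono' {N : Type*} (parent : N → N) (level : N → ℤ)
    (hlevel : ∀ u : N, parent u ≠ u → level (parent u) = level u + 1) :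
    ∀ (j : ℕ) (x : N), level x ≤ level (parent^[j] x) := by
  intro j
  induction j with
  | zero => intro x; simp
  | succ n ih =>
    intro x
    rw [Function.iterate_succ_apply']
    by_cases h : parent (parent^[n] x) = parent^[n] x
    · rw [h]; exact ih x
    · rw [hlevel _ h]; linarith [ih x]

private lemma fix_of_iter' {N : Type*} (parent : N → N) (level : N → ℤ)
    (hlevel : ∀ u : N, parent u ≠ u → level (parent u) = level u + 1)
    {n : ℕ} {x : N} (hn : 0 < n) (h : parent^[n] x = x) : parent x = x := by
  by_contra hx
  have h1 : level (parent x) = level x + 1 := hlevel x hx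
  have h2 : level (parent x) ≤ level (parent^[n-1] (parent x)) :=
    level_mono' parent level hlevel _ _
  have h3 : parent^[n-1] (parent x) = x := by
    rw [← Function.iterate_succ_apply]
    have : n - 1 + 1 = n := Nat.succ_pred_eq_of_pos hn
    rw [show (n-1).succ = n from this]; exact h
  rw [h3] at h2; linarith

private lemma sum_biUnion_le_nonneg {ι α : Type*} [DecidableEq α] (f : α → ℝ)
    (hf : ∀ a, 0 ≤ f a) (s : Finset ι) (t : ι → Finset α) :
    ∑ x ∈ s.biUnion t, f x ≤ ∑ i ∈ s, ∑ x ∈ t i, f x := by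
  classical
  induction s using Finset.induction with
  | empty => simp
  | insert _ _ ha ih =>
    rename_i a s
    rw [Finset.biUnion_insert, Finset.sum_insert ha]
    have h1 : ∑ x ∈ t a ∪ s.biUnion t, f x ≤ ∑ x ∈ t a, f x + ∑ x ∈ s.biUnion t, f x := by
      have := Finset.sum_union_inter (s₁ := t a) (s₂ := s.biUnion t) (f := f)
      have h0 : 0 ≤ ∑ x ∈ t a ∩ s.biUnion t, f x := Finset.sum_nonneg fun i _ => hf i
      linarith
    linarith

/-- correctness of the bottom-up recurrence for the optimal
restricted cost. `opt v` is the minimum cost of a set `S` of descendants of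
`v` whose areas cover `C ∩ A(v)`; if some client is assigned directly to `v`
then `opt v = c v`, otherwise `opt v = min (c v) (Σ_{u child of v} opt u)`. -/
theorem stmt_13 {V N : Type*} [Fintype N] [DecidableEq N]
    (parent : N → N) (level : N → ℤ)
    (hlevel : ∀ u : N, parent u ≠ u → level (parent u) = level u + 1)
    (asg : V → N) (A : N → Set V)
    (hA : ∀ v : N, A v = {p : V | ∃ k : ℕ, parent^[k] (asg p) = v})
    (C : Set V) (hC : C.Finite)
    (c : N → ℝ) (hc : ∀ u : N, 0 < c u)
    (opt : N → ℝ)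
    (hopt_le : ∀ (v : N) (S : Finset N),
      (∀ u ∈ S, ∃ m : ℕ, parent^[m] u = v) →
      (C ∩ A v ⊆ ⋃ u ∈ S, A u) → opt v ≤ ∑ u ∈ S, c u)
    (hopt_ex : ∀ v : N, ∃ S : Finset N,
      (∀ u ∈ S, ∃ m : ℕ, parent^[m] u = v) ∧
      (C ∩ A v ⊆ ⋃ u ∈ S, A u) ∧ opt v = ∑ u ∈ S, c u)
    (v : N) :
    ((∃ p ∈ C, asg p = v) → opt v = c v) ∧
    ((¬ ∃ p ∈ C, asg p = v) →
      opt v = min (c v)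
        (∑ u ∈ Finset.univ.filter (fun u => u ≠ v ∧ parent u = v), opt u)) := by
  classical
  -- {v} is always feasible, so opt v ≤ c v
  have h_le_cv : opt v ≤ c v := by
    have h := hopt_le v {v} (by intro u hu; simp at hu; exact ⟨0, by simp [hu]⟩)
      (by intro p hp; simp only [Finset.mem_singleton, Set.mem_iUnion]; exact ⟨v, rfl, hp.2⟩)
    simpa using h
  constructor
  · -- Part 1: a client assigned directly to v forces opt v = c v
    rintro ⟨p, hpC, hpv⟩
    obtain ⟨S, hSdesc, hScov, hSopt⟩ := hopt_ex v
    have hpA : p ∈ A v := by rw [hA]; exact ⟨0, by simp [hpv]⟩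
    have hmem := hScov ⟨hpC, hpA⟩
    simp only [Set.mem_iUnion] at hmem
    obtain ⟨u, huS, hpu⟩ := hmem
    rw [hA] at hpu
    obtain ⟨k, hk⟩ := hpu
    obtain ⟨m, hm⟩ := hSdesc u huS
    have hkv : parent^[k] v = u := by rw [← hpv]; exact hk
    have hmkv : parent^[m+k] v = v := by
      rw [Function.iterate_add_apply, hkv, hm]
    have huv : u = v := by
      rcases Nat.eq_zero_or_pos (m+k) with h0 | hpos
      · have hk0 : k = 0 := by omega
        rw [← hkv, hk0]; simp
      · have hfx : parent v = v := fix_of_iter' parent level hlevel hpos hmkv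
        rw [← hkv, Function.iterate_fixed hfx]
    have hvS : v ∈ S := huv ▸ huS
    have hcv : c v ≤ ∑ u ∈ S, c u :=
      Finset.single_le_sum (fun i _ => (hc i).le) hvS
    rw [hSopt]
    rw [hSopt] at h_le_cv
    linarith
  · -- Part 2: no client assigned directly to v
    intro hno
    set Ch := Finset.univ.filter (fun u : N => u ≠ v ∧ parent u = v) with hCh
    choose T hTdesc hTcov hTopt using hopt_ex
    -- upper bound: opt v ≤ ∑ child, opt u
    have h_le_sum : opt v ≤ ∑ u ∈ Ch, opt u := by
      have hfeas : opt v ≤ ∑ x ∈ Ch.biUnion T, c x := by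
        apply hopt_le
        · intro x hx
          rw [Finset.mem_biUnion] at hx
          obtain ⟨w, hw, hxw⟩ := hx
          obtain ⟨m, hm⟩ := hTdesc w x hxw
          have hwv : parent w = v := (Finset.mem_filter.mp hw).2.2
          exact ⟨m+1, by rw [Function.iterate_succ_apply', hm, hwv]⟩
        · rintro p ⟨hpC, hpA⟩
          rw [hA] at hpA
          have hex : ∃ k, parent^[k] (asg p) = v := hpA
          have hne : asg p ≠ v := fun h => hno ⟨p, hpC, h⟩
          set k := Nat.find hex with hkdef
          have hk : parent^[k] (asg p) = v := Nat.find_spec hex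
          have hkpos : 0 < k := by
            rcases Nat.eq_zero_or_pos k with h0 | h; · rw [h0] at hk; exact absurd hk hne
            exact h
          set w := parent^[k-1] (asg p) with hwdef
          have hpw : parent w = v := by
            have h1 : parent^[k-1+1] (asg p) = v := by
              rw [show k-1+1 = k by omega]; exact hk
            rw [Function.iterate_succ_apply'] at h1; exact h1
          have hwne : w ≠ v := fun hwv =>
            Nat.find_min hex (show k - 1 < k by omega) hwv
          have hwCh : w ∈ Ch := Finset.mem_filter.mpr ⟨Finset.mem_univ _, hwne, hpw⟩
          have hpAw : p ∈ A w := by rw [hA]; exact ⟨k-1, rfl⟩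
          have := hTcov w ⟨hpC, hpAw⟩
          simp only [Set.mem_iUnion] at this ⊢
          obtain ⟨x, hxT, hpx⟩ := this
          exact ⟨x, Finset.mem_biUnion.mpr ⟨w, hwCh, hxT⟩, hpx⟩
      calc opt v ≤ ∑ x ∈ Ch.biUnion T, c x := hfeas
        _ ≤ ∑ u ∈ Ch, ∑ x ∈ T u, c x :=
            sum_biUnion_le_nonneg c (fun a => (hc a).le) Ch T
        _ = ∑ u ∈ Ch, opt u := by
            exact Finset.sum_congr rfl fun u _ => (hTopt u).symm
    -- lower bound
    obtain ⟨S, hSdesc, hScov, hSopt⟩ : ∃ S : Finset N,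
        (∀ u ∈ S, ∃ m : ℕ, parent^[m] u = v) ∧
        (C ∩ A v ⊆ ⋃ u ∈ S, A u) ∧ opt v = ∑ u ∈ S, c u :=
      ⟨T v, hTdesc v, hTcov v, hTopt v⟩
    have h_ge : min (c v) (∑ u ∈ Ch, opt u) ≤ opt v := by
      by_cases hvS : v ∈ S
      · have : c v ≤ ∑ u ∈ S, c u := Finset.single_le_sum (fun i _ => (hc i).le) hvS
        rw [hSopt]
        exact le_trans (min_le_left _ _) this
      · -- split S among the children
        set Sw : N → Finset N := fun w => S.filter (fun x => ∃ m : ℕ, parent^[m] x = w)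
          with hSwdef
        have hfeasw : ∀ w ∈ Ch, opt w ≤ ∑ x ∈ Sw w, c x := by
          intro w hw
          obtain ⟨hwne, hpw⟩ := (Finset.mem_filter.mp hw).2
          apply hopt_le
          · intro x hx
            exact (Finset.mem_filter.mp hx).2
          · rintro p ⟨hpC, hpAw⟩
            rw [hA] at hpAw
            obtain ⟨j, hj⟩ := hpAw
            have hpAv : p ∈ A v := by
              rw [hA]
              exact ⟨j+1, by rw [Function.iterate_succ_apply', hj, hpw]⟩
            have := hScov ⟨hpC, hpAv⟩
            simp only [Set.mem_iUnion] at this ⊢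
            obtain ⟨x, hxS, hpx⟩ := this
            rw [hA] at hpx
            obtain ⟨k, hk⟩ := hpx
            rcases le_total k j with hkj | hjk
            · -- x is an ancestor position at k ≤ j : x descends... w = parent^[j-k] x
              have hxw : parent^[j-k] x = w := by
                rw [← hk, ← Function.iterate_add_apply,
                  show j - k + k = j by omega]; exact hj
              refine ⟨x, Finset.mem_filter.mpr ⟨hxS, j-k, hxw⟩, ?_⟩
              rw [hA]; exact ⟨k, hk⟩
            · -- j ≤ k : x = parent^[k-j] w; show x = w (the case k > j is impossible)
              have hwx : parent^[k-j] w = x := by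
                rw [← hj, ← Function.iterate_add_apply,
                  show k - j + j = k by omega]; exact hk
              rcases Nat.eq_zero_or_pos (k-j) with h0 | hpos
              · rw [h0] at hwx; simp at hwx
                refine ⟨x, Finset.mem_filter.mpr ⟨hxS, 0, by simp [hwx]⟩, ?_⟩
                rw [hA]; exact ⟨k, hk⟩
              · exfalso
                have hxv : parent^[k-j-1] v = x := by
                  rw [← hpw, ← Function.iterate_succ_apply,
                    show (k-j-1).succ = k - j from Nat.succ_pred_eq_of_pos hpos]
                  exact hwx
                obtain ⟨m, hm⟩ := hSdesc x hxS
                have hvv : parent^[m + (k-j-1)] v = v := by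
                  rw [Function.iterate_add_apply, hxv, hm]
                have hxeqv : x = v := by
                  rcases Nat.eq_zero_or_pos (m + (k-j-1)) with h0 | hpos2
                  · have : k - j - 1 = 0 := by omega
                    rw [← hxv, this]; simp
                  · have hfx : parent v = v := fix_of_iter' parent level hlevel hpos2 hvv
                    rw [← hxv, Function.iterate_fixed hfx]
                exact hvS (hxeqv ▸ hxS)
        -- the Sw are pairwise disjoint over children
        have hdisj : ∀ w1 ∈ Ch, ∀ w2 ∈ Ch, w1 ≠ w2 → Disjoint (Sw w1) (Sw w2) := by
          have key : ∀ w1 w2 : N, w2 ≠ v → parent w1 = v → parent w2 = v →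
              ∀ (t1 t2 : ℕ) (x : N), t1 ≤ t2 → parent^[t1] x = w1 → parent^[t2] x = w2 →
              w1 = w2 := by
            intro w1 w2 hw2 hp1 hp2 t1 t2 x hle h1 h2
            have h12 : parent^[t2-t1] w1 = w2 := by
              rw [← h1, ← Function.iterate_add_apply, show t2 - t1 + t1 = t2 by omega]
              exact h2
            rcases Nat.eq_zero_or_pos (t2-t1) with h0 | hpos
            · rw [h0] at h12; simpa using h12
            · exfalso
              have hw2v : parent^[t2-t1-1] v = w2 := by
                rw [← hp1, ← Function.iterate_succ_apply,
                  show (t2-t1-1).succ = t2 - t1 from Nat.succ_pred_eq_of_pos hpos]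
                exact h12
              have hvv : parent^[t2-t1] v = v := by
                rw [show t2 - t1 = (t2-t1-1) + 1 by omega, Function.iterate_succ_apply',
                  hw2v, hp2]
              have hfx : parent v = v := fix_of_iter' parent level hlevel hpos hvv
              exact hw2 (by rw [← hw2v, Function.iterate_fixed hfx])
          intro w1 hw1 w2 hw2 hne
          obtain ⟨hw1v, hp1⟩ := (Finset.mem_filter.mp hw1).2
          obtain ⟨hw2v, hp2⟩ := (Finset.mem_filter.mp hw2).2
          rw [Finset.disjoint_left]
          intro x hx1 hx2
          obtain ⟨t1, ht1⟩ := (Finset.mem_filter.mp hx1).2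
          obtain ⟨t2, ht2⟩ := (Finset.mem_filter.mp hx2).2
          rcases le_total t1 t2 with h | h
          · exact hne (key w1 w2 hw2v hp1 hp2 t1 t2 x h ht1 ht2)
          · exact hne (key w2 w1 hw1v hp2 hp1 t2 t1 x h ht2 ht1).symm
        have hsum : ∑ w ∈ Ch, opt w ≤ ∑ x ∈ S, c x := by
          calc ∑ w ∈ Ch, opt w ≤ ∑ w ∈ Ch, ∑ x ∈ Sw w, c x :=
              Finset.sum_le_sum hfeasw
            _ = ∑ x ∈ Ch.biUnion Sw, c x := (Finset.sum_biUnion hdisj).symm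
            _ ≤ ∑ x ∈ S, c x := by
                apply Finset.sum_le_sum_of_subset_of_nonneg
                · intro x hx
                  obtain ⟨w, _, hxw⟩ := Finset.mem_biUnion.mp hx
                  exact (Finset.mem_filter.mp hxw).1
                · intro i _ _; exact (hc i).le
        rw [hSopt]
        exact le_trans (min_le_right _ _) hsum
    exact le_antisymm (le_min h_le_cv h_le_sum) h_ge
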